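/- Let Λ ⊂ ℝ^N be a lattice whose first successive minimum is λ = min{‖v‖ : v ∈ Λ, v ≠ 0}, and let x1, x2, x3 ∈ Λ be linearly independent vectors with ‖x1‖ = ‖x2‖ = ‖x3‖ = λ. Let θij denote the angle between xi and xj. Then cos θ23 ≥ cos θ12 + cos θ13 − 1. -/

import Mathlib

open Real InnerProductGeometry RealInnerProductSpace

/-- Let `Λ ⊆ ℝ^N` be a lattice with first successive minimum
`λ = min {‖v‖ : v ∈ Λ, v ≠ 0}`, and let `x1, x2, x3 ∈ Λ` be linearly independent vectors
with `‖x1‖ = ‖x2‖ = ‖x3‖ = λ`. Then `cos θ23 ≥ cos θ12 + cos θ13 − 1`, where `θij` is the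
angle between `xi` and `xj`. -/
theorem cos_angle_wr_inequality {N r : ℕ}
    (b : Fin r → EuclideanSpace ℝ (Fin N)) (hb : LinearIndependent ℝ b)
    (Λ : Submodule ℤ (EuclideanSpace ℝ (Fin N))) (hΛ : Λ = Submodule.span ℤ (Set.range b))
    (lam : ℝ) (hmin : ∀ v ∈ Λ, v ≠ 0 → lam ≤ ‖v‖)
    (x1 x2 x3 : EuclideanSpace ℝ (Fin N)) (h1 : x1 ∈ Λ) (h2 : x2 ∈ Λ) (h3 : x3 ∈ Λ)
    (hind : LinearIndependent ℝ ![x1, x2, x3])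
    (hn1 : ‖x1‖ = lam) (hn2 : ‖x2‖ = lam) (hn3 : ‖x3‖ = lam) :
    Real.cos (angle x1 x2) + Real.cos (angle x1 x3) - 1 ≤ Real.cos (angle x2 x3) := by
  have hx1 : x1 ≠ 0 := by
    have := hind.ne_zero 0
    simpa using this
  have hlam : 0 < lam := by
    rw [← hn1]; exact norm_pos_iff.mpr hx1
  -- v = x1 - x2 - x3 is a nonzero lattice vector
  have hv : x1 - x2 - x3 ∈ Λ := by
    exact Submodule.sub_mem _ (Submodule.sub_mem _ h1 h2) h3
  have hvne : x1 - x2 - x3 ≠ 0 := by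
    intro h
    have h' : (1 : ℝ) • x1 + (-1 : ℝ) • x2 + (-1 : ℝ) • x3 = 0 := by
      simpa [sub_eq_add_neg] using h
    have := (Fintype.linearIndependent_iff.mp hind) ![1, -1, -1]
      (by simpa [Fin.sum_univ_three] using h') 0
    simp at this
  have hle : lam ≤ ‖x1 - x2 - x3‖ := hmin _ hv hvne
  have hsq : lam ^ 2 ≤ ‖x1 - x2 - x3‖ ^ 2 := by
    have := pow_le_pow_left₀ hlam.le hle 2
    simpa using this
  have hexp : ‖x1 - x2 - x3‖ ^ 2
      = ‖x1‖^2 + ‖x2‖^2 + ‖x3‖^2 - 2 * ⟪x1, x2⟫ - 2 * ⟪x1, x3⟫ + 2 * ⟪x2, x3⟫ := by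
    simp only [← real_inner_self_eq_norm_sq, inner_sub_left, inner_sub_right,
      real_inner_comm x2 x1, real_inner_comm x3 x1, real_inner_comm x3 x2]
    ring
  have key : ⟪x1, x2⟫ + ⟪x1, x3⟫ - lam * lam ≤ ⟪x2, x3⟫ := by
    rw [hexp, hn1, hn2, hn3] at hsq
    nlinarith [hsq]
  rw [InnerProductGeometry.cos_angle, InnerProductGeometry.cos_angle, InnerProductGeometry.cos_angle, hn1, hn2, hn3]
  have hl2 : (0 : ℝ) < lam * lam := mul_pos hlam hlam
  have hone : (1 : ℝ) = (lam * lam) / (lam * lam) := (div_self hl2.ne').symm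
  rw [← add_div, hone, ← sub_div, div_le_div_iff₀ hl2 hl2]
  nlinarith [key, hl2]
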